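/- With E(a,b,c) the block derangement number, the recurrence 2a·E(a-1,b,c) + (a-b+c)·E(a,b,c) + (c-a-b-1)·E(a,b+1,c) = 0 holds for all natural numbers a ≥ 1 and b, c ≥ 0. -/

import Mathlib

open Finset

/-- The binomial sum for block derangements of three players,
when the third argument is the largest. The sum is automatically `0`
when the triangle inequality `c ≤ a + b` fails. -/
def Eaux (a b c : ℕ) : ℤ :=
  ∑ k ∈ Finset.range (a + b - c + 1),
    (a.choose k : ℤ) * (b.choose (c - a + k)) * (c.choose (b - k))

/-- The block derangement number `E(a,b,c)`: the binomial sum applied with the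
largest argument placed last. -/
def E3 (a b c : ℕ) : ℤ :=
  if a ≤ c ∧ b ≤ c then Eaux a b c
  else if a ≤ b ∧ c ≤ b then Eaux a c b
  else Eaux b c a

/-- Binomial coefficient with integer lower index, zero when negative. -/
def Bc (n : ℕ) (m : ℤ) : ℤ := if 0 ≤ m then (n.choose m.toNat : ℤ) else 0

lemma Bc_coe (n k : ℕ) : Bc n (k : ℤ) = (n.choose k : ℤ) := by
  simp [Bc]

lemma Bc_neg {m : ℤ} (n : ℕ) (h : m < 0) : Bc n m = 0 := by
  rw [Bc, if_neg (by omega)]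

lemma Bc_of_gt {m : ℤ} (n : ℕ) (h : (n : ℤ) < m) : Bc n m = 0 := by
  rw [Bc, if_pos (by omega)]
  rw [Nat.choose_eq_zero_of_lt (by omega)]
  simp

lemma Bc_abs (n : ℕ) (m : ℤ) : (m + 1) * Bc n (m + 1) = ((n : ℤ) - m) * Bc n m := by
  rcases lt_trichotomy m (-1) with h | h | h
  · rw [Bc_neg n (by omega), Bc_neg n (by omega)]; ring
  · subst h; rw [Bc_neg (m := -1) n (by norm_num)]; ring
  · obtain ⟨k, rfl⟩ := Int.eq_ofNat_of_zero_le (by omega : (0:ℤ) ≤ m)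
    rw [show (k : ℤ) + 1 = ((k + 1 : ℕ) : ℤ) by push_cast; ring, Bc_coe, Bc_coe]
    have h3 : ((n.choose (k+1) : ℤ)) * (k+1) = (n.choose k : ℤ) * ((n:ℤ) - k) := by
      rcases le_or_gt k n with hk | hk
      · have := Nat.choose_succ_right_eq n k
        have h2 : ((n - k : ℕ) : ℤ) = (n : ℤ) - k := by omega
        rw [← h2]; exact_mod_cast congrArg (Nat.cast : ℕ → ℤ) this
      · rw [Nat.choose_eq_zero_of_lt hk, Nat.choose_eq_zero_of_lt (by omega)]; ring
    push_cast
    linear_combination h3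

lemma Bc_top (n : ℕ) (m : ℤ) : ((n : ℤ) + 1) * Bc n m = ((n : ℤ) + 1 - m) * Bc (n + 1) m := by
  rcases lt_or_ge m 0 with h | h
  · rw [Bc_neg n h, Bc_neg (n+1) h]; ring
  · obtain ⟨k, rfl⟩ := Int.eq_ofNat_of_zero_le h
    rw [Bc_coe, Bc_coe]
    rcases le_or_gt k (n+1) with hk | hk
    · have h1 := Nat.add_one_mul_choose_eq n k
      have h2 := Nat.choose_succ_right_eq (n+1) k
      have h4 : ((n + 1 - k : ℕ) : ℤ) = (n : ℤ) + 1 - k := by omega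
      have h1' : ((n:ℤ)+1) * (n.choose k : ℤ) = ((n+1).choose (k+1) : ℤ) * (k+1) := by
        exact_mod_cast congrArg (Nat.cast : ℕ → ℤ) h1
      have h2' : ((n+1).choose (k+1) : ℤ) * (k+1) = ((n+1).choose k : ℤ) * ((n:ℤ)+1-k) := by
        rw [← h4]; exact_mod_cast congrArg (Nat.cast : ℕ → ℤ) h2
      rw [h1', h2']; ring
    · rw [Nat.choose_eq_zero_of_lt hk, Nat.choose_eq_zero_of_lt (by omega)]; ring

lemma Bc_pascal (n : ℕ) (m : ℤ) : Bc (n + 1) (m + 1) = Bc n m + Bc n (m + 1) := by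
  rcases lt_trichotomy m (-1) with h | h | h
  · rw [Bc_neg (n+1) (by omega), Bc_neg n (by omega), Bc_neg n (by omega)]; ring
  · subst h
    rw [Bc_neg (m := -1) n (by norm_num)]
    norm_num [Bc]
  · obtain ⟨k, rfl⟩ := Int.eq_ofNat_of_zero_le (by omega : (0:ℤ) ≤ m)
    rw [show (k : ℤ) + 1 = ((k + 1 : ℕ) : ℤ) by push_cast; ring, Bc_coe, Bc_coe, Bc_coe]
    exact_mod_cast congrArg (Nat.cast : ℕ → ℤ) (Nat.choose_succ_succ n k)

lemma Bc_symm (n : ℕ) (m : ℤ) : Bc n ((n : ℤ) - m) = Bc n m := by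
  rcases lt_or_ge m 0 with h | h
  · rw [Bc_neg n h, Bc_of_gt n (by omega)]
  · rcases le_or_gt m n with h2 | h2
    · obtain ⟨k, rfl⟩ := Int.eq_ofNat_of_zero_le h
      rw [show (n : ℤ) - k = ((n - k : ℕ) : ℤ) by omega, Bc_coe, Bc_coe]
      exact_mod_cast congrArg (Nat.cast : ℕ → ℤ) (Nat.choose_symm (by exact_mod_cast h2))
    · rw [Bc_neg n (by omega), Bc_of_gt n h2]
def Uf (a b c : ℕ) (k : ℕ) : ℤ :=
  Bc a (k : ℤ) * Bc b ((c : ℤ) + k - a) * Bc c ((b : ℤ) - k)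

def Uu (a b c : ℕ) : ℤ := ∑ k ∈ Finset.range (a + 1), Uf a b c k

lemma Uf_zero_left {a b c k : ℕ} (h : a < k) : Uf a b c k = 0 := by
  rw [Uf, Bc_of_gt a (by exact_mod_cast h)]; ring

lemma Uf_zero_right {a b c k : ℕ} (h : b < k) : Uf a b c k = 0 := by
  rw [Uf, Bc_neg c (by omega)]; ring

lemma Uu_eq_range {a b c : ℕ} (N : ℕ) (hN : a < N ∨ b < N) :
    Uu a b c = ∑ k ∈ Finset.range N, Uf a b c k := by
  have big : ∀ M L, L ≤ M → (∀ k, L ≤ k → Uf a b c k = 0) →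
      (∑ k ∈ Finset.range M, Uf a b c k) = ∑ k ∈ Finset.range L, Uf a b c k := by
    intro M L hLM hv
    rw [eq_comm]
    apply Finset.sum_subset (Finset.range_subset_range.2 hLM)
    intro k _ hk
    exact hv k (by simpa using hk)
  have h1 : (∑ k ∈ Finset.range (max (a+1) N), Uf a b c k) = Uu a b c := by
    apply big _ _ (le_max_left _ _)
    intro k hk
    exact Uf_zero_left (by omega)
  have h2 : (∑ k ∈ Finset.range (max (a+1) N), Uf a b c k)
      = ∑ k ∈ Finset.range N, Uf a b c k := by
    apply big _ _ (le_max_right _ _)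
    intro k hk
    rcases hN with h | h
    · exact Uf_zero_left (by omega)
    · exact Uf_zero_right (by omega)
  rw [← h1, h2]

lemma Uu_swap23 (a b c : ℕ) : Uu a b c = Uu a c b := by
  rw [Uu, Uu, ← Finset.sum_range_reflect]
  apply Finset.sum_congr rfl
  intro j hj
  have hja : j ≤ a := by simpa [Nat.lt_succ_iff] using hj
  have hc : ((a + 1 - 1 - j : ℕ) : ℤ) = (a : ℤ) - j := by omega
  rw [Uf, Uf, hc]
  rw [show (c : ℤ) + ((a:ℤ) - j) - a = (c : ℤ) - j by ring,
      show (b : ℤ) - ((a:ℤ) - j) = (b : ℤ) + j - a by ring,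
      Bc_symm a (j : ℤ)]
  ring

lemma Uu_swap13 (a b c : ℕ) : Uu a b c = Uu c b a := by
  rw [Uu_eq_range (a := a) (b+1) (Or.inr (Nat.lt_succ_self b)),
      Uu_eq_range (a := c) (b+1) (Or.inr (Nat.lt_succ_self b)),
      ← Finset.sum_range_reflect]
  apply Finset.sum_congr rfl
  intro j hj
  have hjb : j ≤ b := by simpa [Nat.lt_succ_iff] using hj
  have hc : ((b + 1 - 1 - j : ℕ) : ℤ) = (b : ℤ) - j := by omega
  rw [Uf, Uf, hc]
  rw [show (c : ℤ) + ((b:ℤ) - j) - a = (b:ℤ) - ((a:ℤ) + j - c) by ring,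
      show (b : ℤ) - ((b:ℤ) - j) = (j : ℤ) by ring,
      Bc_symm b ((a:ℤ) + j - c)]
  ring
lemma Eaux_eq_Uu {a b c : ℕ} (h : a ≤ c) : Eaux a b c = Uu a b c := by
  have step1 : Eaux a b c = ∑ k ∈ Finset.range (a + b - c + 1), Uf a b c k := by
    apply Finset.sum_congr rfl
    intro k hk
    have hk' : k ≤ a + b - c := by simpa [Nat.lt_succ_iff] using hk
    have hkb : k ≤ b := by omega
    rw [Uf, show (c : ℤ) + k - a = ((c - a + k : ℕ) : ℤ) by omega,
        show (b : ℤ) - k = ((b - k : ℕ) : ℤ) by omega, Bc_coe, Bc_coe, Bc_coe]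
  rw [step1, Uu_eq_range (a + b + 1) (Or.inl (by omega))]
  apply Finset.sum_subset (Finset.range_subset_range.2 (by omega))
  intro k _ hk
  have hk' : a + b - c + 1 ≤ k := by simpa using hk
  rw [Uf, Bc_of_gt b (by omega)]
  ring

lemma E3_eq_Uu (a b c : ℕ) : E3 a b c = Uu a b c := by
  rw [E3]
  split_ifs with h1 h2
  · exact Eaux_eq_Uu h1.1
  · rw [Eaux_eq_Uu h2.1, ← Uu_swap23]
  · have hba : b ≤ a := by omega
    rw [Eaux_eq_Uu hba, Uu_swap13 b c a, Uu_swap23]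
def tf (a b c : ℕ) (k : ℕ) : ℤ :=
  ((k:ℤ) - b + c + 1) * (Bc (a+1) ((k:ℤ)-1) * Bc b ((c:ℤ)+k-a-2) * Bc c ((b:ℤ)-k-1))
  - c * (Bc (a+1) ((k:ℤ)-1) * Bc b ((c:ℤ)+k-a-2) * Bc c ((b:ℤ)-k))
  + (2*(c:ℤ)-a-b-1) * (Bc (a+1) ((k:ℤ)-1) * Bc b ((c:ℤ)+k-a-2) * Bc c ((b:ℤ)-k+1))
  + (2*(c:ℤ)+2) * (Bc (a+1) ((k:ℤ)-1) * Bc b ((c:ℤ)+k-a-1) * Bc c ((b:ℤ)-k+1))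

lemma point (a b c k : ℕ) :
    2*((a:ℤ)+1) * Uf a b c k + ((a:ℤ)+1-b+c) * Uf (a+1) b c k
      + ((c:ℤ)-a-b-2) * Uf (a+1) (b+1) c k = tf a b c (k+1) - tf a b c k := by
  have h1 := Bc_abs (a+1) ((k:ℤ)-1)
  have h2 := Bc_top a (k:ℤ)
  have h3 := Bc_abs b ((c:ℤ)+k-a-2)
  have h4 := Bc_abs b ((c:ℤ)+k-a-1)
  have h5 := Bc_pascal b ((c:ℤ)+k-a-2)
  have h6 := Bc_abs c ((b:ℤ)-k-2)
  have h7 := Bc_abs c ((b:ℤ)-k-1)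
  have h8 := Bc_abs c ((b:ℤ)-k)
  push_cast at h1 h2 h3 h4 h5 h6 h7 h8
  rw [show (k:ℤ)-1+1 = (k:ℤ) by ring] at h1
  rw [show (c:ℤ)+k-a-2+1 = (c:ℤ)+k-a-1 by ring] at h3 h5
  rw [show (c:ℤ)+k-a-1+1 = (c:ℤ)+k-a by ring] at h4
  rw [show (b:ℤ)-k-2+1 = (b:ℤ)-k-1 by ring] at h6
  rw [show (b:ℤ)-k-1+1 = (b:ℤ)-k by ring] at h7
  simp only [Uf, tf]
  push_cast
  rw [show (c:ℤ)+k-(a+1) = (c:ℤ)+k-a-1 by ring,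
      show (b:ℤ)+1-k = (b:ℤ)-k+1 by ring,
      show (k:ℤ)+1-1 = (k:ℤ) by ring,
      show (c:ℤ)+(k+1)-a-2 = (c:ℤ)+k-a-1 by ring,
      show (c:ℤ)+(k+1)-a-1 = (c:ℤ)+k-a by ring,
      show (b:ℤ)-(k+1)-1 = (b:ℤ)-k-2 by ring,
      show (b:ℤ)-(k+1)+1 = (b:ℤ)-k by ring,
      show (b:ℤ)-(k+1) = (b:ℤ)-k-1 by ring]
  linear_combination
    ((-2)*Bc b ((c:ℤ)+k-a-1) - Bc b ((c:ℤ)+k-a-2)) * Bc c ((b:ℤ)-k+1) * h1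
    + 2 * Bc b ((c:ℤ)+k-a) * Bc c ((b:ℤ)-k) * h2
    + (Bc (a+1) (k:ℤ) + 2*Bc (a+1) ((k:ℤ)-1)) * Bc c ((b:ℤ)-k+1) * h3
    + (-2) * Bc (a+1) (k:ℤ) * Bc c ((b:ℤ)-k) * h4
    + ((c:ℤ)-a-b-2) * Bc (a+1) (k:ℤ) * Bc c ((b:ℤ)-k+1) * h5
    + Bc (a+1) (k:ℤ) * Bc b ((c:ℤ)+k-a-1) * h6
    + (-(Bc (a+1) (k:ℤ) * Bc b ((c:ℤ)+k-a-1)) - Bc (a+1) ((k:ℤ)-1) * Bc b ((c:ℤ)+k-a-2)) * h7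
    + (-(Bc (a+1) (k:ℤ) * Bc b ((c:ℤ)+k-a-1)) + Bc (a+1) ((k:ℤ)-1) * Bc b ((c:ℤ)+k-a-2)) * h8

lemma Uu_rec (a b c : ℕ) :
    2*((a:ℤ)+1) * Uu a b c + ((a:ℤ)+1-b+c) * Uu (a+1) b c
      + ((c:ℤ)-a-b-2) * Uu (a+1) (b+1) c = 0 := by
  have e1 := Uu_eq_range (a := a) (b := b) (c := c) (a+b+c+3) (Or.inl (by omega))
  have e2 := Uu_eq_range (a := a+1) (b := b) (c := c) (a+b+c+3) (Or.inl (by omega))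
  have e3 := Uu_eq_range (a := a+1) (b := b+1) (c := c) (a+b+c+3) (Or.inl (by omega))
  rw [e1, e2, e3, Finset.mul_sum, Finset.mul_sum, Finset.mul_sum,
      ← Finset.sum_add_distrib, ← Finset.sum_add_distrib]
  have hsum : ∀ k ∈ Finset.range (a+b+c+3),
      2*((a:ℤ)+1) * Uf a b c k + ((a:ℤ)+1-b+c) * Uf (a+1) b c k
        + ((c:ℤ)-a-b-2) * Uf (a+1) (b+1) c k = tf a b c (k+1) - tf a b c k :=
    fun k _ => point a b c k
  rw [Finset.sum_congr rfl hsum, Finset.sum_range_sub (tf a b c)]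
  have h0 : tf a b c 0 = 0 := by
    simp only [tf, Nat.cast_zero]
    rw [show (0:ℤ)-1 = -1 by ring, Bc_neg _ (show (-1:ℤ) < 0 by norm_num)]
    ring
  have hN : tf a b c (a+b+c+3) = 0 := by
    simp only [tf]
    rw [Bc_of_gt b (by push_cast; omega), Bc_of_gt b (by push_cast; omega)]
    ring
  rw [h0, hN]
  ring

theorem stmt10 (a b c : ℕ) (ha : 1 ≤ a) :
    2 * (a : ℤ) * E3 (a - 1) b c + ((a : ℤ) - b + c) * E3 a b c +
      ((c : ℤ) - a - b - 1) * E3 a (b + 1) c = 0 := by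
  obtain ⟨a', rfl⟩ : ∃ a', a = a' + 1 := ⟨a - 1, by omega⟩
  simp only [Nat.add_sub_cancel]
  rw [E3_eq_Uu, E3_eq_Uu, E3_eq_Uu]
  have h := Uu_rec a' b c
  push_cast
  linear_combination h
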